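/- Consider minimizing f(c,d) = λ·(d − c) + C·(c·η_c + d/η_d) over c, d ≥ 0 with c ≤ c_rat, d ≤ d_rat, where C > 0, 0 < η_c ≤ 1, η_d ∈ (0,1], and λ ∈ ℝ. If λ satisfies −C·η_c < λ < C/η_d, then every optimal solution satisfies c·d = 0. -/
import Mathlib


theorem stmt_11 (lam C ηc ηd crat drat : ℝ) (hC : C > 0)
    (hηc : 0 < ηc ∧ ηc ≤ 1) (hηd : 0 < ηd ∧ ηd ≤ 1)
    (hlam1 : -C * ηc < lam) (hlam2 : lam < C / ηd)
    (c d : ℝ) (hc : 0 ≤ c) (hd : 0 ≤ d) (hcr : c ≤ crat) (hdr : d ≤ drat)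
    (hopt : ∀ c' d' : ℝ, 0 ≤ c' → 0 ≤ d' → c' ≤ crat → d' ≤ drat →
      lam * (d - c) + C * (c * ηc + d / ηd) ≤ lam * (d' - c') + C * (c' * ηc + d' / ηd)) :
    c * d = 0 := by
  by_contra h
  have hc0 : 0 < c := lt_of_le_of_ne hc (fun h' => h (by rw [← h']; ring))
  have hd0 : 0 < d := lt_of_le_of_ne hd (fun h' => h (by rw [← h']; ring))
  set t := min c d with ht
  have ht0 : 0 < t := lt_min hc0 hd0
  have h1 := hopt (c - t) (d - t) (by simp [ht])
    (by simp [ht]) (by linarith) (by linarith)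
  have hkey : C * ((c - t) * ηc + (d - t) / ηd) < C * (c * ηc + d / ηd) := by
    have h2 : (c - t) * ηc + (d - t) / ηd < c * ηc + d / ηd := by
      have : t * ηc > 0 := mul_pos ht0 hηc.1
      have : t / ηd > 0 := div_pos ht0 hηd.1
      have e : (c - t) * ηc + (d - t) / ηd = c * ηc + d / ηd - (t * ηc + t / ηd) := by
        rw [sub_div]; ring
      rw [e]; linarith
    exact (mul_lt_mul_iff_right₀ hC).mpr h2
  have : lam * (d - t - (c - t)) = lam * (d - c) := by ring_nf
  linarith
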